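/- arXiv:0708.4097 — 3 statements merged into one kernel-verified Lean document; each statement's English description precedes it below -/
import Mathlib

section
/- Let (H,L) be a reduced dynamical base, i.e. ∩_{χ∈L̂}ker χ={0}, and suppose ⊕_{χ∈L̂}L^χ≠{0}. Then ⊕_{χ∈L̂}L^χ is an H-submodule, an H-subcomodule and a subalgebra of L; hence, with the restricted structures, it is itself an H-base algebra. Moreover, for each χ with L^χ≠0 and idempotent generator e_χ, and each character α of H, the element α(e_χ⁽¹⁾)e_χ^[∞] is the idempotent generating L^{ᾱ·χ}. -/
/- Preliminaries: dynamical bases (Hopf algebra H, base algebra L) following Mudrov,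
"On dynamical smash product". -/

noncomputable section
open TensorProduct LinearMap

namespace Dyn

variable (k : Type*) [Field k]
variable (H : Type*) [Ring H] [HopfAlgebra k H]
variable (L : Type*) [Ring L] [Algebra k L]

/-- The "diagonal" action of `H` on a tensor product of two `H`-modules,
`h ⊗ (a ⊗ b) ↦ (h⁽¹⁾ ▷ a) ⊗ (h⁽²⁾ ▷ b)`, where the actions are given in
uncurried form `H ⊗ A → A`, `H ⊗ B → B`. -/
def diagAct {A B : Type*} [AddCommGroup A] [Module k A] [AddCommGroup B] [Module k B]
    (fA : H ⊗[k] A →ₗ[k] A) (fB : H ⊗[k] B →ₗ[k] B) :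
    H ⊗[k] (A ⊗[k] B) →ₗ[k] A ⊗[k] B :=
  TensorProduct.map fA fB
    ∘ₗ (tensorTensorTensorComm k H H A B).toLinearMap
    ∘ₗ rTensor (A ⊗[k] B) (Coalgebra.comul (R := k) (A := H))

/-- The right-hand side of the Yetter-Drinfeld compatibility condition
`h ⊗ λ ↦ h⁽¹⁾ λ⁽¹⁾ γ(h⁽³⁾) ⊗ (h⁽²⁾ ▷ λ^[∞])`, as a linear map `H ⊗ L → H ⊗ L`,
built from an action `act` and a coaction `coact`. -/
def ydRHS (act : H →ₗ[k] L →ₗ[k] L) (coact : L →ₗ[k] H ⊗[k] L) :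
    H ⊗[k] L →ₗ[k] H ⊗[k] L :=
  rTensor L (LinearMap.mul' k H)
    ∘ₗ (TensorProduct.assoc k H H L).symm.toLinearMap
    ∘ₗ TensorProduct.map (LinearMap.mul' k H)
        (TensorProduct.map (HopfAlgebra.antipode (R := k)) (TensorProduct.lift act)
          ∘ₗ (TensorProduct.assoc k H H L).toLinearMap
          ∘ₗ rTensor L (TensorProduct.comm k H H).toLinearMap)
    ∘ₗ (tensorTensorTensorComm k H (H ⊗[k] H) H L).toLinearMap
    ∘ₗ TensorProduct.map
        (lTensor H (Coalgebra.comul (R := k) (A := H)) ∘ₗ Coalgebra.comul (R := k))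
        coact

/-- A base algebra `L` over a Hopf algebra `H` (so `(H, L)` is a dynamical base):
`L` is a left `H`-module algebra, a left `H`-comodule algebra, the action and coaction
satisfy the Yetter-Drinfeld condition, and `L` is braided commutative. -/
structure BaseAlgebra : Type _ where
  /-- the left action of `H` on `L` -/
  act : H →ₗ[k] L →ₗ[k] L
  /-- the left coaction of `H` on `L` -/
  coact : L →ₗ[k] H ⊗[k] L
  act_mul_act : ∀ (h h' : H) (l : L), act (h * h') l = act h (act h' l)
  act_one_act : ∀ l : L, act 1 l = l
  /-- `L` is an `H`-module algebra: `h ▷ (λμ) = (h⁽¹⁾ ▷ λ)(h⁽²⁾ ▷ μ)` -/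
  moduleAlgebra :
    TensorProduct.lift act ∘ₗ lTensor H (LinearMap.mul' k L) =
      LinearMap.mul' k L ∘ₗ diagAct k H (TensorProduct.lift act) (TensorProduct.lift act)
  /-- `h ▷ 1 = ε(h) 1` -/
  act_unit : ∀ h : H, act h 1 = Coalgebra.counit (R := k) h • (1 : L)
  /-- coassociativity of the coaction -/
  coassoc :
    rTensor L (Coalgebra.comul (R := k) (A := H)) ∘ₗ coact =
      (TensorProduct.assoc k H H L).symm.toLinearMap ∘ₗ lTensor H coact ∘ₗ coact
  /-- counit property of the coaction -/
  counit_coact :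
    ∀ l : L, (TensorProduct.lid k L)
      (rTensor L (Coalgebra.counit (R := k) (A := H)) (coact l)) = l
  /-- `L` is an `H`-comodule algebra: the coaction is an algebra map -/
  coact_mul : ∀ l m : L, coact (l * m) = coact l * coact m
  coact_one : coact 1 = 1
  /-- the Yetter-Drinfeld compatibility condition -/
  yd : coact ∘ₗ TensorProduct.lift act = ydRHS k H L act coact
  /-- braided commutativity: `λμ = (λ⁽¹⁾ ▷ μ) λ^[∞]` -/
  braided :
    LinearMap.mul' k L =
      LinearMap.mul' k L ∘ₗ rTensor L (TensorProduct.lift act)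
        ∘ₗ (TensorProduct.assoc k H L L).symm.toLinearMap
        ∘ₗ lTensor H (TensorProduct.comm k L L).toLinearMap
        ∘ₗ (TensorProduct.assoc k H L L).toLinearMap
        ∘ₗ rTensor L coact

variable {k H L}

/-- An invariant character of the base algebra `L`: a unital algebra homomorphism
`L → k` with `χ(h ▷ λ) = ε(h) χ(λ)`. -/
def BaseAlgebra.IsInvChar (B : BaseAlgebra k H L) (χ : L →ₐ[k] k) : Prop :=
  ∀ (h : H) (l : L), χ (B.act h l) = Coalgebra.counit (R := k) h * χ l

/-- `e ∈ L` is a left `χ`-generator: `λ e = χ(λ) e` for all `λ`. -/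
def IsLeftGen (χ : L →ₐ[k] k) (e : L) : Prop := ∀ l : L, l * e = χ l • e

/-- `e ∈ L` is a right `χ`-generator: `e λ = χ(λ) e` for all `λ`. -/
def IsRightGen (χ : L →ₐ[k] k) (e : L) : Prop := ∀ l : L, e * l = χ l • e

/-- The homomorphism `ι_χ : L → H`, `λ ↦ λ⁽¹⁾ χ(λ^[∞])`, associated to a character. -/
def BaseAlgebra.iota (B : BaseAlgebra k H L) (χ : L →ₗ[k] k) : L →ₗ[k] H :=
  (TensorProduct.rid k H).toLinearMap ∘ₗ lTensor H χ ∘ₗ B.coact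

/-- Evaluation of a functional `η ∈ H^*` against the first leg of the coaction:
`λ ↦ ⟨η, λ⁽¹⁾⟩ λ^[∞]`.  This is the action of `H^*_op ⊂ D(H)` on `L`. -/
def BaseAlgebra.coactEval (B : BaseAlgebra k H L) (η : H →ₗ[k] k) : L →ₗ[k] L :=
  (TensorProduct.lid k L).toLinearMap ∘ₗ rTensor L η ∘ₗ B.coact

/-- The adjoint character `χ̃ : λ ↦ χ(ϑ̄ ▷ λ)` of a character `χ`, where
`ϑ̄ = Σᵢ ηⁱ γ(hᵢ)` is the inverse Drinfeld element of the double, computed with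
respect to a basis `b` of `H`: `χ̃(λ) = Σᵢ ⟨ηⁱ, (γ(hᵢ) ▷ λ)⁽¹⁾⟩ χ((γ(hᵢ) ▷ λ)^[∞])`. -/
def BaseAlgebra.adjChar (B : BaseAlgebra k H L) (χ : L →ₗ[k] k)
    {ι : Type*} [Fintype ι] [DecidableEq ι] (b : Module.Basis ι k H) : L →ₗ[k] k :=
  ∑ i : ι, χ ∘ₗ B.coactEval (b.coord i) ∘ₗ B.act (HopfAlgebra.antipode (R := k) (b i))

end Dyn

namespace Dyn

open LinearMap TensorProduct

variable {k : Type*} [Field k] {H : Type*} [Ring H] [HopfAlgebra k H]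
variable {L : Type*} [Ring L] [Algebra k L]

/-- The subspace `⊕_{χ ∈ L̂} L^χ` of `L`: the span of all left `χ`-generators over all
invariant characters `χ`. -/
def BaseAlgebra.genSum (B : BaseAlgebra k H L) : Submodule k L :=
  Submodule.span k {e : L | ∃ χ : L →ₐ[k] k, B.IsInvChar χ ∧ IsLeftGen χ e}

/-! ### Auxiliary development for Statement 5 -/

set_option maxHeartbeats 1000000
set_option synthInstance.maxHeartbeats 400000

section Statement5Aux

/-- Reducedness: an element on which all invariant characters vanish is zero. -/
theorem BaseAlgebra.red_zero {B : BaseAlgebra k H L}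
    (hred : (⨅ χ : {χ : L →ₐ[k] k // B.IsInvChar χ},
      LinearMap.ker (χ : L →ₐ[k] k).toLinearMap) = ⊥)
    {x : L} (hx : ∀ ψ : {χ : L →ₐ[k] k // B.IsInvChar χ}, (ψ : L →ₐ[k] k) x = 0) :
    x = 0 := by
  have hmem : x ∈ (⨅ χ : {χ : L →ₐ[k] k // B.IsInvChar χ},
      LinearMap.ker (χ : L →ₐ[k] k).toLinearMap) :=
    (Submodule.mem_iInf _).2 fun ψ => LinearMap.mem_ker.2 (hx ψ)
  rw [hred] at hmem
  simpa using hmem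

theorem BaseAlgebra.red_eq {B : BaseAlgebra k H L}
    (hred : (⨅ χ : {χ : L →ₐ[k] k // B.IsInvChar χ},
      LinearMap.ker (χ : L →ₐ[k] k).toLinearMap) = ⊥)
    {x y : L} (hxy : ∀ ψ : {χ : L →ₐ[k] k // B.IsInvChar χ},
      (ψ : L →ₐ[k] k) x = (ψ : L →ₐ[k] k) y) : x = y := by
  have h := BaseAlgebra.red_zero hred (x := x - y) (fun ψ => by rw [map_sub, hxy ψ, sub_self])
  exact sub_eq_zero.mp h

/-- Under reducedness, the action of `H` on `L` is trivial. -/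
theorem BaseAlgebra.act_eq_counit_smul {B : BaseAlgebra k H L}
    (hred : (⨅ χ : {χ : L →ₐ[k] k // B.IsInvChar χ},
      LinearMap.ker (χ : L →ₐ[k] k).toLinearMap) = ⊥)
    (h : H) (l : L) :
    B.act h l = Coalgebra.counit (R := k) h • l := by
  refine BaseAlgebra.red_eq hred (fun ψ => ?_)
  rw [ψ.2 h l, map_smul, smul_eq_mul]

/-- A family of pairwise distinct characters admits a "dual" family of elements. -/
theorem sep_family {ι : Type*} [Fintype ι] [DecidableEq ι] (ψ : ι → (L →ₐ[k] k))
    (hinj : Function.Injective ψ) :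
    ∃ u : ι → L, ∀ i j, ψ i (u j) = if i = j then 1 else 0 := by
  classical
  have hx : ∀ i j : ι, ∃ x : L, i ≠ j → ψ i x ≠ ψ j x := by
    intro i j
    by_cases h : i = j
    · exact ⟨0, fun hc => absurd h hc⟩
    · have hne : ψ i ≠ ψ j := fun hc => h (hinj hc)
      obtain ⟨x, hx⟩ := DFunLike.ne_iff.1 hne
      exact ⟨x, fun _ => hx⟩
  choose x hxne using hx
  set z : ι → ι → L := fun i j =>
    (ψ j (x i j) - ψ i (x i j))⁻¹ • (x i j - algebraMap k L (ψ i (x i j))) with hzdef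
  have hzval : ∀ m i j : ι, ψ m (z i j) =
      (ψ j (x i j) - ψ i (x i j))⁻¹ * (ψ m (x i j) - ψ i (x i j)) := by
    intro m i j
    simp only [hzdef, map_smul, smul_eq_mul, map_sub, AlgHom.commutes,
      Algebra.algebraMap_self, RingHom.id_apply]
  refine ⟨fun j => (((Finset.univ.erase j).toList).map (fun i => z i j)).prod,
    fun m j => ?_⟩
  rw [map_list_prod (ψ m), List.map_map]
  by_cases hmj : m = j
  · subst hmj
    rw [if_pos rfl]
    refine List.prod_eq_one (fun y hy => ?_)
    obtain ⟨i, hi, rfl⟩ := List.mem_map.1 hy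
    have hne : i ≠ m := (Finset.mem_erase.1 (Finset.mem_toList.1 hi)).1
    show ψ m (z i m) = 1
    rw [hzval]
    exact inv_mul_cancel₀ (sub_ne_zero.2 (Ne.symm (hxne i m hne)))
  · rw [if_neg hmj]
    apply List.prod_eq_zero
    refine List.mem_map.2 ⟨m,
      Finset.mem_toList.2 (Finset.mem_erase.2 ⟨hmj, Finset.mem_univ m⟩), ?_⟩
    show ψ m (z m j) = 0
    rw [hzval, sub_self, mul_zero]

variable {B : BaseAlgebra k H L}

/-- Any element whose "support" among invariant characters is finite lies in `genSum`. -/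
theorem BaseAlgebra.mem_genSum_of_finite_support
    (hred : (⨅ χ : {χ : L →ₐ[k] k // B.IsInvChar χ},
      LinearMap.ker (χ : L →ₐ[k] k).toLinearMap) = ⊥)
    {w : L}
    (hfin : {ψ : {χ : L →ₐ[k] k // B.IsInvChar χ} | (ψ : L →ₐ[k] k) w ≠ 0}.Finite) :
    w ∈ B.genSum := by
  classical
  set T := hfin.toFinset with hT
  obtain ⟨u, hu⟩ := sep_family (fun t : T => ((t : {χ : L →ₐ[k] k // B.IsInvChar χ}) :
      L →ₐ[k] k)) (by
    intro a b hab
    exact Subtype.ext (Subtype.ext hab))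
  have hgen : ∀ j : T, IsLeftGen ((j : {χ : L →ₐ[k] k // B.IsInvChar χ}) : L →ₐ[k] k)
      (u j * w) := by
    intro j l
    refine BaseAlgebra.red_eq hred (fun ψ' => ?_)
    simp only [map_smul, smul_eq_mul, map_mul]
    by_cases hw0 : (ψ' : L →ₐ[k] k) w = 0
    · rw [hw0]; ring
    · have hmem : ψ' ∈ T := hfin.mem_toFinset.2 hw0
      have hval : (ψ' : L →ₐ[k] k) (u j) =
          (if (⟨ψ', hmem⟩ : T) = j then (1:k) else 0) := hu ⟨ψ', hmem⟩ j
      by_cases ht : (⟨ψ', hmem⟩ : T) = j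
      · have hfun : (ψ' : L →ₐ[k] k) =
            ((j : {χ : L →ₐ[k] k // B.IsInvChar χ}) : L →ₐ[k] k) := by
          rw [← ht]
        rw [hfun]
      · rw [if_neg ht] at hval
        rw [hval]; ring
  have hsum : w = ∑ j : T, u j * w := by
    refine BaseAlgebra.red_eq hred (fun ψ' => ?_)
    rw [map_sum]
    by_cases hw0 : (ψ' : L →ₐ[k] k) w = 0
    · rw [hw0]
      refine (Finset.sum_eq_zero (fun j _ => ?_)).symm
      rw [map_mul, hw0, mul_zero]
    · have hmem : ψ' ∈ T := hfin.mem_toFinset.2 hw0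
      have hterm : ∀ j : T, (ψ' : L →ₐ[k] k) (u j * w) =
          if (⟨ψ', hmem⟩ : T) = j then (ψ' : L →ₐ[k] k) w else 0 := by
        intro j
        rw [map_mul, hu ⟨ψ', hmem⟩ j]
        by_cases ht : (⟨ψ', hmem⟩ : T) = j
        · rw [if_pos ht, if_pos ht, one_mul]
        · rw [if_neg ht, if_neg ht, zero_mul]
      rw [Finset.sum_congr rfl (fun j _ => hterm j), Finset.sum_ite_eq _ _ _,
        if_pos (Finset.mem_univ _)]
  rw [hsum]
  exact Submodule.sum_mem _ (fun j _ => Submodule.subset_span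
    ⟨_, (j : {χ : L →ₐ[k] k // B.IsInvChar χ}).2, hgen j⟩)

/-- The support of an element of a finite-dimensional multiplication-stable subspace
is finite. -/
theorem BaseAlgebra.support_finite_of_mem
    (W : Submodule k L) [FiniteDimensional k W]
    (hstab : ∀ (l x : L), x ∈ W → l * x ∈ W) {w : L} (hw : w ∈ W) :
    {ψ : {χ : L →ₐ[k] k // B.IsInvChar χ} | (ψ : L →ₐ[k] k) w ≠ 0}.Finite := by
  classical
  by_contra hinf
  have hinf' : {ψ : {χ : L →ₐ[k] k // B.IsInvChar χ} |
      (ψ : L →ₐ[k] k) w ≠ 0}.Infinite := hinf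
  set n := Module.finrank k W with hn
  set f := hinf'.natEmbedding with hf
  set ψa : Fin (n + 1) → (L →ₐ[k] k) :=
    fun j => (((f j.1) : {χ : L →ₐ[k] k // B.IsInvChar χ}) : L →ₐ[k] k) with hψa
  have hψw : ∀ j, ψa j w ≠ 0 := fun j => (f j.1).2
  have hinj : Function.Injective ψa := by
    intro a b hab
    have h1 : f a.1 = f b.1 := Subtype.ext (Subtype.ext hab)
    exact Fin.val_injective (f.injective h1)
  obtain ⟨u, hu⟩ := sep_family ψa hinj
  have hind : LinearIndependent k (fun j : Fin (n + 1) =>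
      (⟨u j * w, hstab (u j) w hw⟩ : W)) := by
    rw [Fintype.linearIndependent_iff]
    intro g hg i
    have hgL : (∑ j : Fin (n + 1), g j • (u j * w)) = (0 : L) := by
      have h0 := congrArg (Subtype.val) hg
      simpa using h0
    have happ := congrArg (ψa i) hgL
    rw [map_sum, map_zero] at happ
    have hterm : ∀ j, ψa i (g j • (u j * w)) = if i = j then g j * ψa i w else 0 := by
      intro j
      rw [map_smul, smul_eq_mul, map_mul, hu i j]
      by_cases h : i = j
      · rw [if_pos h, if_pos h, one_mul]
      · rw [if_neg h, if_neg h, zero_mul, mul_zero]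
    rw [Finset.sum_congr rfl (fun j _ => hterm j), Finset.sum_ite_eq _ _ _,
      if_pos (Finset.mem_univ _)] at happ
    exact (mul_eq_zero.1 happ).resolve_right (hψw i)
  have hcard := hind.fintype_card_le_finrank
  rw [Fintype.card_fin] at hcard
  omega

end Statement5Aux
section TensorAux

variable (B : BaseAlgebra k H L)

theorem BaseAlgebra.coactEval_apply (η : H →ₗ[k] k) (x : L) :
    B.coactEval η x = (TensorProduct.lid k L) (rTensor L η (B.coact x)) := rfl

/-- Pointwise coassociativity in a convenient orientation. -/
theorem BaseAlgebra.coassoc_pt (x : L) :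
    lTensor H B.coact (B.coact x) =
      (TensorProduct.assoc k H H L) (rTensor L (Coalgebra.comul (R := k)) (B.coact x)) := by
  have h := LinearMap.congr_fun B.coassoc x
  simp only [LinearMap.comp_apply, LinearEquiv.coe_coe] at h
  rw [h, LinearEquiv.apply_symm_apply]

/-- Composition rule for coaction evaluations. -/
theorem BaseAlgebra.coactEval_coactEval (θ η : H →ₗ[k] k) (x : L) :
    B.coactEval η (B.coactEval θ x) =
      B.coactEval ((LinearMap.mul' k k ∘ₗ TensorProduct.map θ η)
        ∘ₗ Coalgebra.comul (R := k)) x := by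
  have h1 : ∀ t : H ⊗[k] L,
      B.coact ((TensorProduct.lid k L) (rTensor L θ t)) =
        (TensorProduct.lid k (H ⊗[k] L))
          (rTensor (H ⊗[k] L) θ (lTensor H B.coact t)) := by
    intro t
    induction t using TensorProduct.induction_on with
    | zero => simp
    | tmul a b => simp
    | add u v hu hv => simp only [map_add, hu, hv]
  have h2 : ∀ u : (H ⊗[k] H) ⊗[k] L,
      (TensorProduct.lid k L) (rTensor L η ((TensorProduct.lid k (H ⊗[k] L))
        (rTensor (H ⊗[k] L) θ ((TensorProduct.assoc k H H L) u)))) =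
      (TensorProduct.lid k L)
        (rTensor L (LinearMap.mul' k k ∘ₗ TensorProduct.map θ η) u) := by
    intro u
    induction u using TensorProduct.induction_on with
    | zero => simp
    | tmul a b =>
      induction a using TensorProduct.induction_on with
      | zero => simp
      | tmul c d => simp [LinearMap.mul'_apply, smul_smul, mul_comm]
      | add p q hp hq => simp only [TensorProduct.add_tmul, map_add, hp, hq]
    | add u v hu hv => simp only [map_add, hu, hv]
  rw [B.coactEval_apply η, B.coactEval_apply θ, h1, B.coassoc_pt, h2, B.coactEval_apply]
  simp only [LinearMap.rTensor_comp_apply]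

theorem conv_antipode_counit_lTensor (α : H →ₐ[k] k) (h : H) :
    (LinearMap.mul' k k) ((TensorProduct.map α.toLinearMap
      (α.toLinearMap ∘ₗ HopfAlgebra.antipode (R := k))) (Coalgebra.comul (R := k) h)) =
    Coalgebra.counit (R := k) h := by
  have h1 : (LinearMap.mul' k k ∘ₗ TensorProduct.map α.toLinearMap
      (α.toLinearMap ∘ₗ HopfAlgebra.antipode (R := k))) =
      α.toLinearMap ∘ₗ (LinearMap.mul' k H ∘ₗ
        lTensor H (HopfAlgebra.antipode (R := k))) := by
    apply TensorProduct.ext'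
    intro c d
    simp [LinearMap.mul'_apply]
  have h2 := LinearMap.congr_fun h1 (Coalgebra.comul (R := k) h)
  simp only [LinearMap.comp_apply] at h2
  rw [h2, HopfAlgebra.mul_antipode_lTensor_comul_apply]
  simp [AlgHom.commutes, Algebra.algebraMap_self]

theorem conv_antipode_counit_rTensor (α : H →ₐ[k] k) (h : H) :
    (LinearMap.mul' k k) ((TensorProduct.map
      (α.toLinearMap ∘ₗ HopfAlgebra.antipode (R := k)) α.toLinearMap)
      (Coalgebra.comul (R := k) h)) =
    Coalgebra.counit (R := k) h := by
  have h1 : (LinearMap.mul' k k ∘ₗ TensorProduct.map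
      (α.toLinearMap ∘ₗ HopfAlgebra.antipode (R := k)) α.toLinearMap) =
      α.toLinearMap ∘ₗ (LinearMap.mul' k H ∘ₗ
        rTensor H (HopfAlgebra.antipode (R := k))) := by
    apply TensorProduct.ext'
    intro c d
    simp [LinearMap.mul'_apply]
  have h2 := LinearMap.congr_fun h1 (Coalgebra.comul (R := k) h)
  simp only [LinearMap.comp_apply] at h2
  rw [h2, HopfAlgebra.mul_antipode_rTensor_comul_apply]
  simp [AlgHom.commutes, Algebra.algebraMap_self]

theorem BaseAlgebra.coactEval_counit (x : L) :
    B.coactEval (Coalgebra.counit (R := k) (A := H)) x = x := by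
  simpa [BaseAlgebra.coactEval] using B.counit_coact x

theorem BaseAlgebra.coactEval_antipode_comp_left (α : H →ₐ[k] k) (x : L) :
    B.coactEval (α.toLinearMap ∘ₗ HopfAlgebra.antipode (R := k))
      (B.coactEval α.toLinearMap x) = x := by
  rw [B.coactEval_coactEval]
  have hconv : (LinearMap.mul' k k ∘ₗ TensorProduct.map α.toLinearMap
      (α.toLinearMap ∘ₗ HopfAlgebra.antipode (R := k))) ∘ₗ Coalgebra.comul (R := k) =
      Coalgebra.counit (R := k) (A := H) :=
    LinearMap.ext (fun h => by
      simpa only [LinearMap.comp_apply] using conv_antipode_counit_lTensor α h)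
  rw [hconv]
  exact B.coactEval_counit x

theorem BaseAlgebra.coactEval_antipode_comp_right (α : H →ₐ[k] k) (x : L) :
    B.coactEval α.toLinearMap
      (B.coactEval (α.toLinearMap ∘ₗ HopfAlgebra.antipode (R := k)) x) = x := by
  rw [B.coactEval_coactEval]
  have hconv : (LinearMap.mul' k k ∘ₗ TensorProduct.map
      (α.toLinearMap ∘ₗ HopfAlgebra.antipode (R := k)) α.toLinearMap)
      ∘ₗ Coalgebra.comul (R := k) =
      Coalgebra.counit (R := k) (A := H) :=
    LinearMap.ext (fun h => by
      simpa only [LinearMap.comp_apply] using conv_antipode_counit_rTensor α h)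
  rw [hconv]
  exact B.coactEval_counit x

theorem BaseAlgebra.coactEval_algHom_mul (α : H →ₐ[k] k) (x y : L) :
    B.coactEval α.toLinearMap (x * y) =
      B.coactEval α.toLinearMap x * B.coactEval α.toLinearMap y := by
  have key : ∀ t s : H ⊗[k] L,
      (TensorProduct.lid k L) (rTensor L α.toLinearMap (t * s)) =
        (TensorProduct.lid k L) (rTensor L α.toLinearMap t) *
          (TensorProduct.lid k L) (rTensor L α.toLinearMap s) := by
    intro t s
    induction t using TensorProduct.induction_on with
    | zero => simp
    | tmul a b =>
      induction s using TensorProduct.induction_on with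
      | zero => simp
      | tmul c d =>
        simp [Algebra.TensorProduct.tmul_mul_tmul, smul_smul,
          Algebra.mul_smul_comm, Algebra.smul_mul_assoc, mul_comm]
      | add u v hu hv => simp only [mul_add, map_add, hu, hv]
    | add u v hu hv => simp only [add_mul, map_add, hu, hv]
  rw [B.coactEval_apply, B.coact_mul, key, ← B.coactEval_apply, ← B.coactEval_apply]

/-- The key commutation identity: for a left `χ`-generator `e` and any `l`,
`(1 ⊗ l) δ(e) = (γ(ι_χ(l)) ⊗ 1) δ(e)`. -/
theorem BaseAlgebra.key_identity {χ : L →ₐ[k] k} {e : L} (hgen : IsLeftGen χ e) (l : L) :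
    (1 ⊗ₜ[k] l) * B.coact e =
      ((HopfAlgebra.antipode (R := k) (B.iota χ.toLinearMap l)) ⊗ₜ[k] (1 : L)) *
        B.coact e := by
  classical
  set E := B.coact e with hE
  set Λ : H ⊗[k] (H ⊗[k] L) →ₗ[k] H ⊗[k] L :=
    TensorProduct.lift ((LinearMap.mul k (H ⊗[k] L)) ∘ₗ
      (((TensorProduct.mk k H L).flip 1) ∘ₗ HopfAlgebra.antipode (R := k))) with hΛdef
  have hΛ : ∀ (a : H) (t : H ⊗[k] L),
      Λ (a ⊗ₜ[k] t) = ((HopfAlgebra.antipode (R := k) a) ⊗ₜ[k] (1 : L)) * t := by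
    intro a t
    simp [hΛdef, LinearMap.mul_apply']
  have h1 : Λ (lTensor H B.coact (B.coact l)) = 1 ⊗ₜ[k] l := by
    rw [B.coassoc_pt l]
    have haux : ∀ u : (H ⊗[k] H) ⊗[k] L,
        Λ ((TensorProduct.assoc k H H L) u) =
          rTensor L (LinearMap.mul' k H ∘ₗ rTensor H (HopfAlgebra.antipode (R := k))) u := by
      intro u
      induction u using TensorProduct.induction_on with
      | zero => simp
      | tmul a b =>
        induction a using TensorProduct.induction_on with
        | zero => simp [TensorProduct.zero_tmul]
        | tmul c d =>
          rw [TensorProduct.assoc_tmul, hΛ]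
          simp [Algebra.TensorProduct.tmul_mul_tmul, LinearMap.mul'_apply]
        | add p q hp hq => simp only [TensorProduct.add_tmul, map_add, hp, hq]
      | add u v hu hv => simp only [map_add, hu, hv]
    rw [haux, ← LinearMap.rTensor_comp_apply]
    have hHopf : (LinearMap.mul' k H ∘ₗ rTensor H (HopfAlgebra.antipode (R := k)))
        ∘ₗ Coalgebra.comul (R := k) =
        (Algebra.linearMap k H) ∘ₗ Coalgebra.counit (R := k) := by
      rw [LinearMap.comp_assoc]
      exact HopfAlgebra.mul_antipode_rTensor_comul
    rw [hHopf]
    have haux2 : ∀ t : H ⊗[k] L,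
        rTensor L ((Algebra.linearMap k H) ∘ₗ Coalgebra.counit (R := k)) t =
          1 ⊗ₜ[k] ((TensorProduct.lid k L)
            (rTensor L (Coalgebra.counit (R := k)) t)) := by
      intro t
      induction t using TensorProduct.induction_on with
      | zero => simp
      | tmul a b =>
        simp only [rTensor_tmul, LinearMap.comp_apply, Algebra.linearMap_apply,
          TensorProduct.lid_tmul]
        rw [Algebra.algebraMap_eq_smul_one, TensorProduct.smul_tmul,
          TensorProduct.tmul_smul]
      | add u v hu hv => simp only [map_add, hu, hv, TensorProduct.tmul_add]
    rw [haux2, B.counit_coact l]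
  have hREL : (LinearMap.mulRight k E) ∘ₗ B.coact =
      (LinearMap.toSpanSingleton k (H ⊗[k] L) E) ∘ₗ χ.toLinearMap := by
    refine LinearMap.ext (fun b => ?_)
    simp only [LinearMap.comp_apply, LinearMap.mulRight_apply,
      LinearMap.toSpanSingleton_apply, AlgHom.toLinearMap_apply]
    rw [hE, ← B.coact_mul, hgen b, map_smul]
  have h2 : Λ (lTensor H B.coact (B.coact l)) * E =
      ((HopfAlgebra.antipode (R := k) (B.iota χ.toLinearMap l)) ⊗ₜ[k] (1 : L)) * E := by
    have haux3 : ∀ t : H ⊗[k] (H ⊗[k] L),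
        Λ t * E = Λ (lTensor H (LinearMap.mulRight k E) t) := by
      intro t
      induction t using TensorProduct.induction_on with
      | zero => simp
      | tmul a s => rw [hΛ, lTensor_tmul, hΛ, LinearMap.mulRight_apply, mul_assoc]
      | add u v hu hv => rw [map_add, add_mul, hu, hv, map_add, map_add]
    rw [haux3, ← LinearMap.lTensor_comp_apply, hREL]
    have haux4 : ∀ t : H ⊗[k] L,
        Λ (lTensor H ((LinearMap.toSpanSingleton k (H ⊗[k] L) E)
            ∘ₗ χ.toLinearMap) t) =
          ((HopfAlgebra.antipode (R := k)
            ((TensorProduct.rid k H) (lTensor H χ.toLinearMap t))) ⊗ₜ[k] (1 : L)) * E := by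
      intro t
      induction t using TensorProduct.induction_on with
      | zero => simp
      | tmul a b =>
        simp only [lTensor_tmul, LinearMap.comp_apply, AlgHom.toLinearMap_apply,
          LinearMap.toSpanSingleton_apply, TensorProduct.rid_tmul]
        rw [TensorProduct.tmul_smul, map_smul, hΛ, map_smul,
          ← TensorProduct.smul_tmul', Algebra.smul_mul_assoc]
      | add u v hu hv =>
        simp only [map_add, hu, hv, TensorProduct.add_tmul, add_mul]
    rw [haux4]
    have : (TensorProduct.rid k H) (lTensor H χ.toLinearMap (B.coact l)) =
        B.iota χ.toLinearMap l := rfl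
    rw [this]
  rw [← h1]
  exact h2

/-- Coaction of a generator lands in `H ⊗ genSum`. -/
theorem BaseAlgebra.coact_gen_mem_range
    (hred : (⨅ χ : {χ : L →ₐ[k] k // B.IsInvChar χ},
      LinearMap.ker (χ : L →ₐ[k] k).toLinearMap) = ⊥)
    {χ : L →ₐ[k] k} {e : L} (hgen : IsLeftGen χ e) :
    B.coact e ∈ LinearMap.range (lTensor H B.genSum.subtype) := by
  classical
  set b : Module.Basis (Module.Basis.ofVectorSpaceIndex k H) k H := Module.Basis.ofVectorSpace k H with hb
  set Ψ : H ⊗[k] L ≃ₗ[k] (Module.Basis.ofVectorSpaceIndex k H →₀ L) :=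
    (TensorProduct.congr b.repr (LinearEquiv.refl k L)).trans
      (TensorProduct.finsuppScalarLeft k L _) with hΨ
  set E := B.coact e with hE
  set F := Ψ E with hF
  have haux : ∀ (t : H ⊗[k] L) (i), Ψ t i =
      (TensorProduct.lid k L) (rTensor L (b.coord i) t) := by
    intro t
    induction t using TensorProduct.induction_on with
    | zero => simp
    | tmul a y =>
      intro i
      simp [hΨ, TensorProduct.congr_tmul, Module.Basis.coord_apply]
    | add u v hu hv =>
      intro i
      simp only [map_add, Finsupp.add_apply, hu, hv]
  have hErepr : E = ∑ i ∈ F.support, (b i) ⊗ₜ[k] (F i) := by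
    have h0 : Ψ.symm F = E := by rw [hF]; exact Ψ.symm_apply_apply E
    have hFs : (∑ i ∈ F.support, Finsupp.single i (F i)) = F := F.sum_single
    calc E = Ψ.symm F := h0.symm
      _ = Ψ.symm (∑ i ∈ F.support, Finsupp.single i (F i)) := by rw [hFs]
      _ = ∑ i ∈ F.support, Ψ.symm (Finsupp.single i (F i)) := map_sum _ _ _
      _ = ∑ i ∈ F.support, (b i) ⊗ₜ[k] (F i) := by
          refine Finset.sum_congr rfl (fun i _ => ?_)
          rw [hΨ, LinearEquiv.symm_trans_apply,
            TensorProduct.finsuppScalarLeft_symm_apply_single,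
            TensorProduct.congr_symm_tmul, Module.Basis.repr_symm_single_one]
          simp
  have hFW : ∀ i, F i ∈ Submodule.span k
      (Set.range (fun ξ : H →ₗ[k] k => (TensorProduct.lid k L) (rTensor L ξ E))) := by
    intro i
    have hFi : F i = (TensorProduct.lid k L) (rTensor L (b.coord i) E) := by
      rw [hF]; exact haux E i
    rw [hFi]
    exact Submodule.subset_span ⟨b.coord i, rfl⟩
  set W : Submodule k L := Submodule.span k
    (Set.range (fun ξ : H →ₗ[k] k => (TensorProduct.lid k L) (rTensor L ξ E))) with hW
  have hΦsum : ∀ ξ : H →ₗ[k] k,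
      (TensorProduct.lid k L) (rTensor L ξ E) = ∑ i ∈ F.support, ξ (b i) • F i := by
    intro ξ
    rw [hErepr, map_sum, map_sum]
    exact Finset.sum_congr rfl (fun i _ => by simp)
  have hWle : W ≤ Submodule.span k (F '' ↑F.support) := by
    rw [hW]
    refine Submodule.span_le.2 ?_
    rintro _ ⟨ξ, rfl⟩
    dsimp only
    rw [hΦsum ξ]
    exact SetLike.mem_coe.2 (Submodule.sum_mem _ (fun i hi => Submodule.smul_mem _ _
      (Submodule.subset_span ⟨i, hi, rfl⟩)))
  haveI hfd1 : FiniteDimensional k (Submodule.span k (F '' ↑F.support)) :=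
    FiniteDimensional.span_of_finite k ((F.support.finite_toSet).image F)
  haveI hfd : FiniteDimensional k W := Submodule.finiteDimensional_of_le hWle
  have hstab : ∀ (l x : L), x ∈ W → l * x ∈ W := by
    intro l x hx
    refine Submodule.span_induction ?_ ?_ ?_ ?_ hx
    · rintro _ ⟨ξ, rfl⟩
      have c1 : ∀ t : H ⊗[k] L,
          l * ((TensorProduct.lid k L) (rTensor L ξ t)) =
            (TensorProduct.lid k L) (rTensor L ξ ((1 ⊗ₜ[k] l) * t)) := by
        intro t
        induction t using TensorProduct.induction_on with
        | zero => simp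
        | tmul a y =>
          simp [Algebra.TensorProduct.tmul_mul_tmul, mul_smul_comm]
        | add u v hu hv => simp only [map_add, mul_add, hu, hv]
      have c2 : ∀ (c : H) (t : H ⊗[k] L),
          (TensorProduct.lid k L) (rTensor L ξ ((c ⊗ₜ[k] (1 : L)) * t)) =
            (TensorProduct.lid k L) (rTensor L (ξ ∘ₗ LinearMap.mulLeft k c) t) := by
        intro c t
        induction t using TensorProduct.induction_on with
        | zero => simp
        | tmul a y =>
          simp [Algebra.TensorProduct.tmul_mul_tmul]
        | add u v hu hv => simp only [map_add, mul_add, hu, hv]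
      rw [c1 E, hE, B.key_identity hgen l, ← hE, c2]
      exact Submodule.subset_span ⟨ξ ∘ₗ LinearMap.mulLeft k
        (HopfAlgebra.antipode (R := k) (B.iota χ.toLinearMap l)), rfl⟩
    · rw [mul_zero]; exact W.zero_mem
    · intro a c _ _ ha hc
      rw [mul_add]; exact W.add_mem ha hc
    · intro c a _ ha
      rw [mul_smul_comm]; exact W.smul_mem _ ha
  have hmem : ∀ i, F i ∈ B.genSum := fun i =>
    BaseAlgebra.mem_genSum_of_finite_support hred
      (BaseAlgebra.support_finite_of_mem W hstab (hFW i))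
  refine ⟨∑ i ∈ F.support, (b i) ⊗ₜ[k] (⟨F i, hmem i⟩ : B.genSum), ?_⟩
  rw [map_sum]
  simp only [lTensor_tmul, Submodule.subtype_apply]
  exact hErepr.symm

end TensorAux
/-- Suppose the dynamical base `(H,L)` is reduced
(`∩_{χ∈L̂} ker χ = 0`) and `⊕_{χ∈L̂} L^χ ≠ 0`.  Then `⊕_χ L^χ` is an `H`-submodule, an
`H`-subcomodule and a subalgebra of `L` (hence an `H`-base algebra with the restricted
structures).  Moreover for every invariant character `χ` with a nonzero idempotent
generator `e_χ` of `L^χ`, and every character `α` of `H`, the element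
`α(e_χ⁽¹⁾) e_χ^[∞]` is the idempotent generating `L^{ᾱ·χ}`, where
`(ᾱ·χ)(λ) = (α∘γ)(λ⁽¹⁾) χ(λ^[∞])`. -/
theorem stmt5 (B : BaseAlgebra k H L)
    (hred : (⨅ χ : {χ : L →ₐ[k] k // B.IsInvChar χ},
      LinearMap.ker (χ : L →ₐ[k] k).toLinearMap) = ⊥)
    (hne : ∃ χ : L →ₐ[k] k, B.IsInvChar χ ∧ ∃ e : L, e ≠ 0 ∧ IsLeftGen χ e) :
    -- `⊕_χ L^χ` is an `H`-submodule
    (∀ (h : H), ∀ x ∈ B.genSum, B.act h x ∈ B.genSum) ∧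
    -- `⊕_χ L^χ` is an `H`-subcomodule
    (∀ x ∈ B.genSum, B.coact x ∈ LinearMap.range (lTensor H B.genSum.subtype)) ∧
    -- `⊕_χ L^χ` is a subalgebra (closed under multiplication)
    (∀ x ∈ B.genSum, ∀ y ∈ B.genSum, x * y ∈ B.genSum) ∧
    -- the twist of an idempotent generator by a character of `H`
    (∀ χ : L →ₐ[k] k, B.IsInvChar χ →
      ∀ e : L, IsLeftGen χ e → e * e = e → e ≠ 0 →
      ∀ α : H →ₐ[k] k,
        let f := B.coactEval α.toLinearMap e
        let χ' : L →ₗ[k] k :=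
          χ.toLinearMap ∘ₗ
            B.coactEval (α.toLinearMap ∘ₗ HopfAlgebra.antipode (R := k))
        f * f = f ∧ (∀ l : L, l * f = χ' l • f) ∧
          ∀ e' : L, (∀ l : L, l * e' = χ' l • e') → ∃ c : k, e' = c • f) := by
  clear hne
  refine ⟨?_, ?_, ?_, ?_⟩
  · -- H-submodule
    intro h x hx
    rw [BaseAlgebra.act_eq_counit_smul hred h x]
    exact B.genSum.smul_mem _ hx
  · -- H-subcomodule
    intro x hx
    refine Submodule.span_induction ?_ ?_ ?_ ?_ hx
    · rintro y ⟨χ, _hχ, hgen⟩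
      exact B.coact_gen_mem_range hred hgen
    · rw [map_zero]; exact Submodule.zero_mem _
    · intro a c _ _ ha hc
      rw [map_add]; exact Submodule.add_mem _ ha hc
    · intro c a _ ha
      rw [map_smul]; exact Submodule.smul_mem _ _ ha
  · -- subalgebra
    intro x _hx y hy
    refine Submodule.span_induction ?_ ?_ ?_ ?_ hy
    · rintro z ⟨ψ, hψ, hz⟩
      rw [hz x]
      exact B.genSum.smul_mem _ (Submodule.subset_span ⟨ψ, hψ, hz⟩)
    · rw [mul_zero]; exact Submodule.zero_mem _
    · intro a c _ _ ha hc
      rw [mul_add]; exact Submodule.add_mem _ ha hc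
    · intro c a _ ha
      rw [mul_smul_comm]; exact Submodule.smul_mem _ _ ha
  · -- the twist
    intro χ hχ e hgen hid hne0 α
    intro f χ'
    have hχe : χ e = 1 := by
      have h1 : χ e • e = e := by rw [← hgen e]; exact hid
      have h2 : (χ e - 1) • e = 0 := by rw [sub_smul, one_smul, h1, sub_self]
      rcases smul_eq_zero.1 h2 with h | h
      · exact sub_eq_zero.mp h
      · exact absurd h hne0
    refine ⟨?_, ?_, ?_⟩
    · show B.coactEval α.toLinearMap e * B.coactEval α.toLinearMap e =
        B.coactEval α.toLinearMap e
      rw [← B.coactEval_algHom_mul α e e, hid]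
    · intro l
      show l * B.coactEval α.toLinearMap e = χ' l • B.coactEval α.toLinearMap e
      have hl := B.coactEval_antipode_comp_right α l
      calc l * B.coactEval α.toLinearMap e
          = B.coactEval α.toLinearMap
              (B.coactEval (α.toLinearMap ∘ₗ HopfAlgebra.antipode (R := k)) l) *
            B.coactEval α.toLinearMap e := by rw [hl]
        _ = B.coactEval α.toLinearMap
              (B.coactEval (α.toLinearMap ∘ₗ HopfAlgebra.antipode (R := k)) l * e) :=
            (B.coactEval_algHom_mul α _ e).symm
        _ = B.coactEval α.toLinearMap
              (χ (B.coactEval (α.toLinearMap ∘ₗ HopfAlgebra.antipode (R := k)) l) • e) := by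
            rw [hgen]
        _ = χ (B.coactEval (α.toLinearMap ∘ₗ HopfAlgebra.antipode (R := k)) l) •
              B.coactEval α.toLinearMap e := by rw [map_smul]
        _ = χ' l • B.coactEval α.toLinearMap e := rfl
    · intro e' he'
      set m := B.coactEval (α.toLinearMap ∘ₗ HopfAlgebra.antipode (R := k)) e' with hm
      have hminj : ∀ a c : L,
          B.coactEval α.toLinearMap a = B.coactEval α.toLinearMap c → a = c := by
        intro a c hac
        have h0 := congrArg
          (B.coactEval (α.toLinearMap ∘ₗ HopfAlgebra.antipode (R := k))) hac
        rwa [B.coactEval_antipode_comp_left, B.coactEval_antipode_comp_left] at h0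
      have hme' : B.coactEval α.toLinearMap m = e' := B.coactEval_antipode_comp_right α e'
      have hmgen : ∀ l : L, l * m = χ l • m := by
        intro l
        apply hminj
        rw [B.coactEval_algHom_mul α l m, hme',
          he' (B.coactEval α.toLinearMap l), map_smul, hme']
        show χ' (B.coactEval α.toLinearMap l) • e' = χ l • e'
        have : χ' (B.coactEval α.toLinearMap l) = χ l := by
          show χ (B.coactEval (α.toLinearMap ∘ₗ HopfAlgebra.antipode (R := k))
            (B.coactEval α.toLinearMap l)) = χ l
          rw [B.coactEval_antipode_comp_left]
        rw [this]
      have hmval : m = χ m • e := by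
        refine BaseAlgebra.red_eq hred (fun ψ' => ?_)
        rw [map_smul, smul_eq_mul]
        by_cases hc : (ψ' : L →ₐ[k] k) = χ
        · rw [hc, hχe, mul_one]
        · obtain ⟨l₀, hl₀⟩ := DFunLike.ne_iff.1 hc
          have hψm : (ψ' : L →ₐ[k] k) m = 0 := by
            have h0 := congrArg (ψ' : L →ₐ[k] k) (hmgen l₀)
            rw [map_mul, map_smul, smul_eq_mul] at h0
            by_contra hz
            exact hl₀ (mul_right_cancel₀ hz h0)
          have hψe : (ψ' : L →ₐ[k] k) e = 0 := by
            have h0 := congrArg (ψ' : L →ₐ[k] k) (hgen l₀)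
            rw [map_mul, map_smul, smul_eq_mul] at h0
            by_contra hz
            exact hl₀ (mul_right_cancel₀ hz h0)
          rw [hψm, hψe, mul_zero]
      refine ⟨χ m, ?_⟩
      conv_lhs => rw [← hme', hmval]
      rw [map_smul]

end Dyn
end
end

section
/- Let (H,L) be a dynamical base and χ a projective invariant character of L, with idempotent e_χ∈L^χ satisfying χ(e_χ)=1, and set t_χ=ι_χ(e_χ), a central idempotent of H. Then for every left H-module V one has V[χ]=t_χV, i.e. v∈V satisfies ι_χ(λ)·v=χ(λ)v for all λ∈L if and only if t_χ·v=v. -/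
/- Preliminaries: dynamical bases (Hopf algebra H, base algebra L) following Mudrov,
"On dynamical smash product". -/

noncomputable section
open TensorProduct LinearMap

namespace Dyn

universe u

section Aux

variable {k : Type*} [Field k] {H : Type*} [Ring H] [HopfAlgebra k H]
  {L : Type*} [Ring L] [Algebra k L]

/-- The map `H ⊗ L → H`, `h ⊗ l ↦ χ(l) h`. -/
def toH (χ : L →ₗ[k] k) : H ⊗[k] L →ₗ[k] H :=
  (TensorProduct.rid k H).toLinearMap ∘ₗ lTensor H χ

lemma toH_mul (χ : L →ₐ[k] k) (x y : H ⊗[k] L) :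
    toH (H := H) χ.toLinearMap (x * y) =
      toH (H := H) χ.toLinearMap x * toH (H := H) χ.toLinearMap y := by
  induction x using TensorProduct.induction_on with
  | zero => simp
  | tmul h l =>
    induction y using TensorProduct.induction_on with
    | zero => simp
    | tmul h' l' =>
      simp only [toH, Algebra.TensorProduct.tmul_mul_tmul, coe_comp,
        LinearEquiv.coe_coe, Function.comp_apply, lTensor_tmul, AlgHom.toLinearMap_apply,
        map_mul, TensorProduct.rid_tmul]
      rw [mul_smul, smul_mul_assoc, mul_smul_comm]
    | add a b ha hb => simp only [mul_add, map_add, ha, hb]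
  | add a b ha hb => simp only [add_mul, map_add, ha, hb]

lemma iota_eq_toH (B : BaseAlgebra k H L) (χ : L →ₗ[k] k) (l : L) :
    B.iota χ l = toH χ (B.coact l) := rfl

lemma iota_mul (B : BaseAlgebra k H L) (χ : L →ₐ[k] k) (l m : L) :
    B.iota χ.toLinearMap (l * m) =
      B.iota χ.toLinearMap l * B.iota χ.toLinearMap m := by
  rw [iota_eq_toH, iota_eq_toH, iota_eq_toH, B.coact_mul, toH_mul]

end Aux

/-- Let `χ` be a projective invariant character of `L`, with idempotent
generator `e_χ ∈ L^χ` satisfying `χ(e_χ) = 1`, and `t_χ = ι_χ(e_χ)`.  Then for every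
left `H`-module `V` one has `V[χ] = t_χ V`: a vector `v` satisfies
`ι_χ(λ)·v = χ(λ)v` for all `λ ∈ L` if and only if `t_χ · v = v`. -/
theorem stmt9 {k : Type*} [Field k] {H : Type u} [Ring H] [HopfAlgebra k H]
    {L : Type*} [Ring L] [Algebra k L]
    (B : BaseAlgebra k H L) (χ : L →ₐ[k] k) (hχ : B.IsInvChar χ)
    (e : L) (he : IsLeftGen χ e) (hee : e * e = e) (hχe : χ e = 1) :
    ∀ (V : Type u) (_ : AddCommGroup V) (_ : Module k V)
      (ρ : H →ₗ[k] V →ₗ[k] V),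
      (∀ v : V, ρ 1 v = v) →
      (∀ (h h' : H) (v : V), ρ (h * h') v = ρ h (ρ h' v)) →
      ∀ v : V, (∀ l : L, ρ (B.iota χ.toLinearMap l) v = χ l • v) ↔
        ρ (B.iota χ.toLinearMap e) v = v := by
  intro V _ _ ρ _ hmul v
  constructor
  · intro hv
    have := hv e
    rwa [hχe, one_smul] at this
  · intro hv l
    have key : B.iota χ.toLinearMap l * B.iota χ.toLinearMap e =
        χ l • B.iota χ.toLinearMap e := by
      rw [← iota_mul, he l, map_smul]
    calc ρ (B.iota χ.toLinearMap l) v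
        = ρ (B.iota χ.toLinearMap l) (ρ (B.iota χ.toLinearMap e) v) := by rw [hv]
      _ = ρ (B.iota χ.toLinearMap l * B.iota χ.toLinearMap e) v := (hmul _ _ v).symm
      _ = χ l • ρ (B.iota χ.toLinearMap e) v := by rw [key, map_smul, LinearMap.smul_apply]
      _ = χ l • v := by rw [hv]

end Dyn
end
end

section
/- Let (H,L) be a dynamical base, χ an invariant character of L, A a unital dynamical algebra over (H,L), B=A⋊L, and B^L_χ={b∈B : ι_χ(λ)▷b=χ(λ)b for all λ∈L} (a subalgebra of B, where H acts on B as an H-module algebra). Then the restriction of the projection ℘_χ:B→A_χ, which evaluates χ on the L-factor of the factorization B=A·L, defines a surjective homomorphism of H-algebras B^L_χ→(A^L_χ,⋆_χ), and through this homomorphism ℘_χ:B→A_χ is a homomorphism of right B^L_χ-modules. -/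
set_option synthInstance.maxHeartbeats 1000000
set_option maxHeartbeats 1000000


/- Preliminaries: dynamical bases (Hopf algebra H, base algebra L) following Mudrov,
"On dynamical smash product". -/

noncomputable section
open TensorProduct LinearMap

namespace Dyn

open TensorProduct LinearMap

variable {k : Type*} [Field k] {H : Type*} [Ring H] [HopfAlgebra k H]
variable {L : Type*} [Ring L] [Algebra k L]
variable {A : Type*} [AddCommGroup A] [Module k A]

/-- The equivariant permutation `τ : L ⊗ A → A ⊗ L`, `λ ⊗ a ↦ (λ⁽¹⁾ ▷ a) ⊗ λ^[∞]`,
for an `H`-module `A` with action `act`. -/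
def tau (B : BaseAlgebra k H L) (act : H →ₗ[k] A →ₗ[k] A) :
    L ⊗[k] A →ₗ[k] A ⊗[k] L :=
  rTensor L (TensorProduct.lift act)
    ∘ₗ (TensorProduct.assoc k H A L).symm.toLinearMap
    ∘ₗ lTensor H (TensorProduct.comm k L A).toLinearMap
    ∘ₗ (TensorProduct.assoc k H L A).toLinearMap
    ∘ₗ rTensor A B.coact

variable (B : BaseAlgebra k H L)

/-- A dynamical algebra over the dynamical base `(H, L)`: a left `H`-module `A`
with an `H`-equivariant multiplication `∗ : A ⊗ A → A ⊗ L` satisfying the shifted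
associativity condition. -/
structure DynAlgebra (A : Type*) [AddCommGroup A] [Module k A] where
  /-- the `H`-action on `A` -/
  act : H →ₗ[k] A →ₗ[k] A
  act_mul_act : ∀ (h h' : H) (a : A), act (h * h') a = act h (act h' a)
  act_one_act : ∀ a : A, act 1 a = a
  /-- the dynamical multiplication `∗ : A ⊗ A → A ⊗ L` -/
  mul : A ⊗[k] A →ₗ[k] A ⊗[k] L
  /-- `H`-equivariance of the multiplication -/
  equivariant :
    mul ∘ₗ diagAct k H (TensorProduct.lift act) (TensorProduct.lift act) =
      diagAct k H (TensorProduct.lift act) (TensorProduct.lift B.act) ∘ₗ lTensor H mul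
  /-- shifted associativity -/
  shifted_assoc :
    lTensor A (LinearMap.mul' k L) ∘ₗ (TensorProduct.assoc k A L L).toLinearMap
      ∘ₗ rTensor L mul ∘ₗ (TensorProduct.assoc k A A L).symm.toLinearMap
      ∘ₗ lTensor A (tau B act)
      ∘ₗ (TensorProduct.assoc k A L A).toLinearMap ∘ₗ rTensor A mul =
    lTensor A (LinearMap.mul' k L) ∘ₗ (TensorProduct.assoc k A L L).toLinearMap
      ∘ₗ rTensor L mul ∘ₗ (TensorProduct.assoc k A A L).symm.toLinearMap
      ∘ₗ lTensor A mul ∘ₗ (TensorProduct.assoc k A A A).toLinearMap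

/-- A unital dynamical algebra: `1_A ∗ a = a ∗ 1_A = a ⊗ 1_L`. -/
structure UnitalDynAlgebra (A : Type*) [AddCommGroup A] [Module k A] extends
    DynAlgebra B A where
  one : A
  mul_one' : ∀ a : A, mul (a ⊗ₜ[k] one) = a ⊗ₜ[k] (1 : L)
  one_mul' : ∀ a : A, mul (one ⊗ₜ[k] a) = a ⊗ₜ[k] (1 : L)
  /-- the unit is `H`-invariant -/
  act_unit : ∀ h : H, act h one = Coalgebra.counit (R := k) h • one

variable {B}

/-- The multiplication of the dynamical smash product `B = A ⋊ L` on `A ⊗ L`: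
`(a ⊗ λ)(b ⊗ μ) = (a ⋆₁ (λ⁽¹⁾ ▷ b)) ⊗ ρ₁ λ^[∞] μ`. -/
def DynAlgebra.smashMul (D : DynAlgebra B A) :
    (A ⊗[k] L) ⊗[k] (A ⊗[k] L) →ₗ[k] A ⊗[k] L :=
  lTensor A (LinearMap.mul' k L)
    ∘ₗ (TensorProduct.assoc k A L L).toLinearMap
    ∘ₗ rTensor L D.mul
    ∘ₗ (TensorProduct.assoc k A A L).symm.toLinearMap
    ∘ₗ lTensor A (lTensor A (LinearMap.mul' k L))
    ∘ₗ lTensor A (TensorProduct.assoc k A L L).toLinearMap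
    ∘ₗ lTensor A (rTensor L (tau B D.act))
    ∘ₗ lTensor A (TensorProduct.assoc k L A L).symm.toLinearMap
    ∘ₗ (TensorProduct.assoc k A L (A ⊗[k] L)).toLinearMap

/-- The `H`-action on the smash product `B = A ⊗ L` (diagonal action). -/
def DynAlgebra.actB (D : DynAlgebra B A) :
    H ⊗[k] (A ⊗[k] L) →ₗ[k] A ⊗[k] L :=
  diagAct k H (TensorProduct.lift D.act) (TensorProduct.lift B.act)

/-- The embedding `A → A ⊗ L`, `a ↦ a ⊗ 1_L`. -/
def embA : A →ₗ[k] A ⊗[k] L := (TensorProduct.mk k A L).flip 1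

/-- The embedding `L → A ⊗ L`, `λ ↦ 1_A ⊗ λ`, for a unital dynamical algebra. -/
def UnitalDynAlgebra.embL (D : UnitalDynAlgebra B A) : L →ₗ[k] A ⊗[k] L :=
  TensorProduct.mk k A L D.one

/-- Evaluation of a functional `χ` on the (right) `L`-factor of `B = A·L`:
`a ⊗ λ ↦ χ(λ) a`. -/
def projR (χ : L →ₗ[k] k) : A ⊗[k] L →ₗ[k] A :=
  (TensorProduct.rid k A).toLinearMap ∘ₗ lTensor A χ

/-- Evaluation of a functional `ξ` on the left `L`-factor of `B = L·A`:
`a ⊗ λ = λ^[∞]·(γ̄(λ⁽¹⁾) ▷ a) ↦ ξ(λ^[∞]) (γ̄(λ⁽¹⁾) ▷ a)`, where `γ̄ = γinv` is the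
inverse of the antipode. -/
def projL (B : BaseAlgebra k H L) (act : H →ₗ[k] A →ₗ[k] A)
    (γinv : H →ₗ[k] H) (ξ : L →ₗ[k] k) : A ⊗[k] L →ₗ[k] A :=
  TensorProduct.lift act
    ∘ₗ rTensor A γinv
    ∘ₗ (TensorProduct.comm k A H).toLinearMap
    ∘ₗ lTensor A (TensorProduct.rid k H).toLinearMap
    ∘ₗ lTensor A (lTensor H ξ)
    ∘ₗ lTensor A B.coact

/-- The operation `⋆_χ` on `A`: `a ⋆_χ b = (id ⊗ χ)(a ∗ b)`. -/
def DynAlgebra.opStar (D : DynAlgebra B A) (χ : L →ₗ[k] k) : A ⊗[k] A →ₗ[k] A :=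
  projR χ ∘ₗ D.mul

/-- The operation `⊛_ξ` on `A`: `a ⊛_ξ b = ξ(ℓ₁)(a •₁ b)` where `a ∗ b = ℓ₁ (a •₁ b)`
is the presentation of the dynamical product with the `L`-factor on the left. -/
def DynAlgebra.opDia (D : DynAlgebra B A) (γinv : H →ₗ[k] H) (ξ : L →ₗ[k] k) :
    A ⊗[k] A →ₗ[k] A :=
  projL B D.act γinv ξ ∘ₗ D.mul

/-- The subspace `A^L_χ = {a ∈ A : ι_χ(λ) ▷ a = χ(λ) a for all λ ∈ L}`. -/
def DynAlgebra.ALχ (D : DynAlgebra B A) (χ : L →ₗ[k] k) : Set A :=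
  {a : A | ∀ l : L, D.act (B.iota χ l) a = χ l • a}

/-- The subspace of `H`-invariants `A^H = {a : h ▷ a = ε(h) a}`. -/
def DynAlgebra.AH (D : DynAlgebra B A) : Set A :=
  {a : A | ∀ h : H, D.act h a = Coalgebra.counit (R := k) h • a}

/-- The left action of the smash product `B` on the induced module `A_χ = B ⊗_L k_χ`
(with underlying space `A`): `b · x = ℘_χ(b (x ⊗ 1))`. -/
def DynAlgebra.lactB (D : DynAlgebra B A) (χ : L →ₗ[k] k) :
    (A ⊗[k] L) ⊗[k] A →ₗ[k] A :=
  projR χ ∘ₗ D.smashMul ∘ₗ lTensor (A ⊗[k] L) embA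

/-- The right action of the smash product `B` on the induced module
`_ξA = k_ξ ⊗_L B` (with underlying space `A`): `x · b = _ξ℘((x ⊗ 1) b)`. -/
def DynAlgebra.ractB (D : DynAlgebra B A) (γinv : H →ₗ[k] H) (ξ : L →ₗ[k] k) :
    A ⊗[k] (A ⊗[k] L) →ₗ[k] A :=
  projL B D.act γinv ξ ∘ₗ D.smashMul ∘ₗ rTensor (A ⊗[k] L) embA

end Dyn

namespace Dyn

open TensorProduct LinearMap

variable {k : Type*} [Field k] {H : Type*} [Ring H] [HopfAlgebra k H]
variable {L : Type*} [Ring L] [Algebra k L]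
variable {A : Type*} [AddCommGroup A] [Module k A]

/-- The subspace `B^L_χ = {b ∈ B : ι_χ(λ) ▷ b = χ(λ) b for all λ ∈ L}` of the smash
product `B = A ⋊ L`, where `H` acts on `B` by the (diagonal) module-algebra action. -/
def DynAlgebra.BLχ {B : BaseAlgebra k H L} (D : DynAlgebra B A)
    (χ : L →ₗ[k] k) : Set (A ⊗[k] L) :=
  {p : A ⊗[k] L | ∀ l : L, D.actB (B.iota χ l ⊗ₜ[k] p) = χ l • p}

section Helpers

variable {B : BaseAlgebra k H L} (D : DynAlgebra B A) (χ : L →ₐ[k] k)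

lemma projR_tmul (χ' : L →ₗ[k] k) (a : A) (l : L) :
    projR χ' (a ⊗ₜ[k] l) = χ' l • a := by
  simp [projR]

lemma rid_lTensor_counit_comul (h : H) :
    (TensorProduct.rid k H) ((lTensor H (Coalgebra.counit (R := k))) (Coalgebra.comul h)) = h := by
  rw [Coalgebra.lTensor_counit_comul]
  simp

lemma diag_core (hχ : B.IsInvChar χ) (a : A) (l : L) (c : H ⊗[k] H) :
    projR χ.toLinearMap (TensorProduct.map (TensorProduct.lift D.act)
        (TensorProduct.lift B.act) ((tensorTensorTensorComm k H H A L) (c ⊗ₜ[k] (a ⊗ₜ[k] l)))) =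
      χ l • D.act ((TensorProduct.rid k H) ((lTensor H (Coalgebra.counit (R := k))) c)) a := by
  induction c using TensorProduct.induction_on with
  | zero => simp
  | tmul x y =>
      simp only [tensorTensorTensorComm_tmul, TensorProduct.map_tmul, TensorProduct.lift.tmul,
        projR_tmul, lTensor_tmul, TensorProduct.rid_tmul, map_smul, LinearMap.smul_apply,
        AlgHom.toLinearMap_apply]
      rw [hχ y l, mul_comm, mul_smul]
  | add c₁ c₂ ih₁ ih₂ =>
      simp only [add_tmul, map_add, ih₁, ih₂, LinearMap.add_apply, smul_add]

lemma diag_core_one (a : A) (c : H ⊗[k] H) :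
    TensorProduct.map (TensorProduct.lift D.act) (TensorProduct.lift B.act)
        ((tensorTensorTensorComm k H H A L) (c ⊗ₜ[k] (a ⊗ₜ[k] (1 : L)))) =
      (D.act ((TensorProduct.rid k H) ((lTensor H (Coalgebra.counit (R := k))) c)) a) ⊗ₜ[k]
        (1 : L) := by
  induction c using TensorProduct.induction_on with
  | zero => simp
  | tmul x y =>
      simp only [tensorTensorTensorComm_tmul, TensorProduct.map_tmul, TensorProduct.lift.tmul,
        lTensor_tmul, TensorProduct.rid_tmul, map_smul, LinearMap.smul_apply]
      rw [B.act_unit y, TensorProduct.tmul_smul, TensorProduct.smul_tmul']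
  | add c₁ c₂ ih₁ ih₂ =>
      simp only [add_tmul, map_add, ih₁, ih₂, LinearMap.add_apply, TensorProduct.add_tmul]

/-- `℘_χ` is `H`-equivariant. -/
lemma projR_actB (hχ : B.IsInvChar χ) (h : H) (p : A ⊗[k] L) :
    projR χ.toLinearMap (D.actB (h ⊗ₜ[k] p)) = D.act h (projR χ.toLinearMap p) := by
  induction p using TensorProduct.induction_on with
  | zero => simp
  | tmul a l =>
      simp only [DynAlgebra.actB, diagAct, coe_comp, Function.comp_apply, LinearEquiv.coe_coe,
        rTensor_tmul]
      rw [diag_core D χ hχ, rid_lTensor_counit_comul, projR_tmul, map_smul]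
      rfl
  | add p₁ p₂ ih₁ ih₂ =>
      simp only [TensorProduct.tmul_add, map_add, ih₁, ih₂]

lemma actB_tmul_one (h : H) (a : A) :
    D.actB (h ⊗ₜ[k] (a ⊗ₜ[k] (1 : L))) = (D.act h a) ⊗ₜ[k] (1 : L) := by
  simp only [DynAlgebra.actB, diagAct, coe_comp, Function.comp_apply, LinearEquiv.coe_coe,
    rTensor_tmul]
  rw [diag_core_one, rid_lTensor_counit_comul]

lemma projR_mul_assoc (ν : L) (e : A ⊗[k] L) :
    projR χ.toLinearMap ((lTensor A (LinearMap.mul' k L))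
        ((TensorProduct.assoc k A L L) (e ⊗ₜ[k] ν))) =
      χ ν • projR χ.toLinearMap e := by
  induction e using TensorProduct.induction_on with
  | zero => simp
  | tmul c ρ =>
      simp only [TensorProduct.assoc_tmul, lTensor_tmul, LinearMap.mul'_apply, projR_tmul,
        AlgHom.toLinearMap_apply, map_mul]
      rw [mul_comm, mul_smul]
  | add e₁ e₂ ih₁ ih₂ =>
      simp only [TensorProduct.add_tmul, map_add, ih₁, ih₂, smul_add]

lemma smash_core (a b : A) (μ : L) (d : H ⊗[k] L) :
    projR χ.toLinearMap ((lTensor A (LinearMap.mul' k L)) ((TensorProduct.assoc k A L L)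
      ((rTensor L D.mul) ((TensorProduct.assoc k A A L).symm (a ⊗ₜ[k]
        ((lTensor A (LinearMap.mul' k L)) ((TensorProduct.assoc k A L L)
          (((rTensor L (TensorProduct.lift D.act)) ((TensorProduct.assoc k H A L).symm
            ((lTensor H (TensorProduct.comm k L A)) ((TensorProduct.assoc k H L A)
              (d ⊗ₜ[k] b))))) ⊗ₜ[k] μ)))))))) =
    χ μ • projR χ.toLinearMap (D.mul (a ⊗ₜ[k]
      D.act ((TensorProduct.rid k H) ((lTensor H χ.toLinearMap) d)) b)) := by
  induction d using TensorProduct.induction_on with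
  | zero => simp
  | tmul h l =>
      simp only [TensorProduct.assoc_tmul, lTensor_tmul, TensorProduct.comm_tmul,
        TensorProduct.assoc_symm_tmul, rTensor_tmul, TensorProduct.lift.tmul,
        LinearMap.mul'_apply, TensorProduct.rid_tmul, AlgHom.toLinearMap_apply,
        LinearEquiv.coe_coe, coe_comp, Function.comp_apply]
      rw [projR_mul_assoc χ (l * μ)]
      simp only [map_smul, LinearMap.smul_apply, TensorProduct.tmul_smul, map_mul, smul_smul,
        AlgHom.toLinearMap_apply]
      rw [mul_comm]
  | add d₁ d₂ ih₁ ih₂ =>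
      simp only [TensorProduct.add_tmul, map_add, TensorProduct.tmul_add, ih₁, ih₂,
        LinearMap.add_apply, smul_add]

lemma projR_smashMul (a : A) (lam : L) (q : A ⊗[k] L) :
    projR χ.toLinearMap (D.smashMul ((a ⊗ₜ[k] lam) ⊗ₜ[k] q)) =
      D.opStar χ.toLinearMap (a ⊗ₜ[k] D.act (B.iota χ.toLinearMap lam)
        (projR χ.toLinearMap q)) := by
  induction q using TensorProduct.induction_on with
  | zero => simp
  | tmul b μ =>
      simp only [DynAlgebra.smashMul, tau, coe_comp, Function.comp_apply, LinearEquiv.coe_coe,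
        TensorProduct.assoc_tmul, lTensor_tmul, TensorProduct.assoc_symm_tmul, rTensor_tmul]
      rw [smash_core D χ a b μ (B.coact lam)]
      simp only [BaseAlgebra.iota, DynAlgebra.opStar, coe_comp, Function.comp_apply,
        LinearEquiv.coe_coe, projR_tmul, map_smul, TensorProduct.tmul_smul,
        AlgHom.toLinearMap_apply]
  | add q₁ q₂ ih₁ ih₂ =>
      simp only [TensorProduct.tmul_add, map_add, ih₁, ih₂]

end Helpers

/-- The restriction of the projection `℘_χ : B → A_χ` (evaluating `χ`
on the `L`-factor of `B = A·L`) to `B^L_χ` defines a surjective homomorphism of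
`H`-algebras `B^L_χ → (A^L_χ, ⋆_χ)`, and through it `℘_χ` is a homomorphism of right
`B^L_χ`-modules. -/
theorem stmt15 (B : BaseAlgebra k H L) (U : UnitalDynAlgebra B A)
    (χ : L →ₐ[k] k) (hχ : B.IsInvChar χ) :
    ∀ (D : DynAlgebra B A), D = U.toDynAlgebra →
    -- `℘_χ` maps `B^L_χ` into `A^L_χ`
    (∀ p ∈ D.BLχ χ.toLinearMap,
      projR χ.toLinearMap p ∈ D.ALχ χ.toLinearMap) ∧
    -- surjectivity onto `A^L_χ`
    (∀ a ∈ D.ALχ χ.toLinearMap,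
      ∃ p ∈ D.BLχ χ.toLinearMap, projR χ.toLinearMap p = a) ∧
    -- `℘_χ` is an algebra homomorphism on `B^L_χ`
    (∀ p ∈ D.BLχ χ.toLinearMap, ∀ q ∈ D.BLχ χ.toLinearMap,
      projR χ.toLinearMap (D.smashMul (p ⊗ₜ[k] q)) =
        D.opStar χ.toLinearMap
          (projR χ.toLinearMap p ⊗ₜ[k] projR χ.toLinearMap q)) ∧
    -- `℘_χ` is `H`-equivariant
    (∀ (h : H) (p : A ⊗[k] L),
      projR χ.toLinearMap (D.actB (h ⊗ₜ[k] p)) =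
        D.act h (projR χ.toLinearMap p)) ∧
    -- `℘_χ : B → A_χ` is a homomorphism of right `B^L_χ`-modules
    (∀ (p : A ⊗[k] L), ∀ q ∈ D.BLχ χ.toLinearMap,
      projR χ.toLinearMap (D.smashMul (p ⊗ₜ[k] q)) =
        D.opStar χ.toLinearMap
          (projR χ.toLinearMap p ⊗ₜ[k] projR χ.toLinearMap q)) := by
  rintro D rfl
  set D := U.toDynAlgebra with hD
  have key : ∀ (p : A ⊗[k] L), ∀ q ∈ D.BLχ χ.toLinearMap,
      projR χ.toLinearMap (D.smashMul (p ⊗ₜ[k] q)) =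
        D.opStar χ.toLinearMap
          (projR χ.toLinearMap p ⊗ₜ[k] projR χ.toLinearMap q) := by
    intro p q hq
    simp only [DynAlgebra.BLχ, Set.mem_setOf_eq] at hq
    induction p using TensorProduct.induction_on with
    | zero => simp
    | tmul a lam =>
        have h1 : D.act (B.iota χ.toLinearMap lam) (projR χ.toLinearMap q) =
            χ.toLinearMap lam • projR χ.toLinearMap q := by
          rw [← projR_actB D χ hχ, hq lam, map_smul]
        rw [projR_smashMul D χ a lam q, h1, projR_tmul]
        simp only [map_smul, TensorProduct.tmul_smul, TensorProduct.smul_tmul',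
          AlgHom.toLinearMap_apply]
    | add p₁ p₂ ih₁ ih₂ =>
        simp only [TensorProduct.add_tmul, map_add, ih₁, ih₂]
  refine ⟨?_, ?_, fun p hp q hq => key p q hq, projR_actB D χ hχ, key⟩
  · intro p hp
    simp only [DynAlgebra.BLχ, Set.mem_setOf_eq] at hp
    simp only [DynAlgebra.ALχ, Set.mem_setOf_eq]
    intro m
    rw [← projR_actB D χ hχ, hp m, map_smul]
  · intro a ha
    simp only [DynAlgebra.ALχ, Set.mem_setOf_eq] at ha
    refine ⟨a ⊗ₜ[k] (1 : L), ?_, ?_⟩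
    · simp only [DynAlgebra.BLχ, Set.mem_setOf_eq]
      intro l
      rw [actB_tmul_one, ha l, TensorProduct.smul_tmul']
    · rw [projR_tmul]
      simp

end Dyn
end
end
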